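/- Let S_λ be a bounded left-invertible weighted shift on a rootless, leafless directed tree T = (V,E). Then for every integer n ≥ 1, the range of S_λ^n equals the set of f ∈ ℓ²(V) such that the function f/λ^{(n)} is constant on Chi^n(v) for every v ∈ V. -/

import Mathlib

/-- A countably infinite, leafless, rootless directed tree, encoded by its parent
function: every vertex has a child (leafless), there are no circuits, and the tree
is connected (any two vertices have a common ancestor). -/
structure RootlessTree (V : Type*) where
  par : V → V
  leafless : ∀ u : V, ∃ w : V, par w = u
  acyclic : ∀ (u : V) (n : ℕ), 0 < n → par^[n] u ≠ u
  connected : ∀ u w : V, ∃ k l : ℕ, par^[k] u = par^[l] w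

/-- `Aset T v n` is the set `A(v,n)`: `A(v,0) = {v}` and
`A(v,n) = Chi^n(par^n(v)) \ Chi^{n-1}(par^{n-1}(v))` for `n ≥ 1`. -/
def Aset {V : Type*} (T : RootlessTree V) (v : V) : ℕ → Set V
  | 0 => {v}
  | n + 1 => {w | T.par^[n + 1] w = T.par^[n + 1] v ∧ ¬ T.par^[n] w = T.par^[n] v}

open scoped ENNReal

/-- `lamN T wt n u` is `λ⁽ⁿ⁾(u) = λ_u · λ_{par u} ⋯ λ_{parⁿ⁻¹ u}`. -/
def lamN {V : Type*} (T : RootlessTree V) (wt : V → ℝ) (n : ℕ) (u : V) : ℝ :=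
  ∏ j ∈ Finset.range n, wt (T.par^[j] u)

/-- `alphaFun T wt v = α_λ(v) = Σ_{n≥0} Σ_{u ∈ A(v,n)} (λ⁽ⁿ⁾(u)/λ⁽ⁿ⁾(v))²`,
as an extended nonnegative real. -/
noncomputable def alphaFun {V : Type*} (T : RootlessTree V) (wt : V → ℝ) (v : V) : ℝ≥0∞ :=
  ∑' n : ℕ, ∑' u : (Aset T v n), ENNReal.ofReal ((lamN T wt n u / lamN T wt n v) ^ 2)

open scoped NNReal
open scoped Classical

lemma lamN_pos' {V : Type*} (T : RootlessTree V) (wt : V → ℝ) (hwt : ∀ u, 0 < wt u)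
    (n : ℕ) (u : V) : 0 < lamN T wt n u :=
  Finset.prod_pos fun _ _ => hwt _

lemma lamN_succ {V : Type*} (T : RootlessTree V) (wt : V → ℝ) (n : ℕ) (u : V) :
    lamN T wt (n + 1) u = lamN T wt n u * wt (T.par^[n] u) :=
  Finset.prod_range_succ _ _

lemma lamN_succ' {V : Type*} (T : RootlessTree V) (wt : V → ℝ) (n : ℕ) (u : V) :
    lamN T wt (n + 1) u = wt u * lamN T wt n (T.par u) := by
  rw [lamN, Finset.prod_range_succ']
  simp [lamN, mul_comm, Function.iterate_succ_apply]

lemma pow_apply' {V : Type*} (T : RootlessTree V) (wt : V → ℝ)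
    (S : lp (fun _ : V => ℂ) 2 →L[ℂ] lp (fun _ : V => ℂ) 2)
    (hS : ∀ (f : lp (fun _ : V => ℂ) 2) (v : V), (S f) v = (wt v : ℂ) * f (T.par v))
    (m : ℕ) (f : lp (fun _ : V => ℂ) 2) (v : V) :
    ((S ^ m) f) v = (lamN T wt m v : ℂ) * f (T.par^[m] v) := by
  induction m generalizing f with
  | zero => simp [lamN]
  | succ m ih =>
    have h1 : (S ^ (m+1)) f = (S ^ m) (S f) := by
      rw [pow_succ]; rfl
    rw [h1, ih (S f), hS, lamN_succ, Function.iterate_succ_apply']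
    push_cast
    ring

lemma child_sum_bound {V : Type*} (T : RootlessTree V)
    (wt : V → ℝ) (hwt : ∀ u : V, 0 < wt u)
    (S : lp (fun _ : V => ℂ) 2 →L[ℂ] lp (fun _ : V => ℂ) 2)
    (hS : ∀ (f : lp (fun _ : V => ℂ) 2) (v : V), (S f) v = (wt v : ℂ) * f (T.par v))
    {c : ℝ} (hc : 0 < c) (hb : ∀ f : lp (fun _ : V => ℂ) 2, c * ‖f‖ ≤ ‖S f‖)
    (x : V) :
    ENNReal.ofReal (c ^ 2) ≤ ∑' w : (T.par ⁻¹' {x} : Set V), ENNReal.ofReal (wt w ^ 2) := by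
  classical
  set e : lp (fun _ : V => ℂ) 2 := lp.single 2 x (1 : ℂ) with he
  have hp : 0 < (2 : ℝ≥0∞).toReal := by norm_num
  have hne : ‖e‖ = 1 := by
    rw [he]
    have := lp.norm_single (E := fun _ : V => ℂ) (p := 2) (by norm_num) x (1:ℂ)
    simpa using this
  have hcn : c ≤ ‖S e‖ := by simpa [hne] using hb e
  have hsum : Summable fun v : V => ‖(S e) v‖ ^ (2:ℝ) := by
    have := lp.memℓp (S e)
    rwa [memℓp_gen_iff hp] at this
  have hnorm : ‖S e‖ ^ (2:ℝ) = ∑' v : V, ‖(S e) v‖ ^ (2:ℝ) := by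
    simpa using lp.norm_rpow_eq_tsum hp (S e)
  have hval : ∀ v : V, ‖(S e) v‖ ^ (2:ℝ) = if T.par v = x then wt v ^ 2 else 0 := by
    intro v
    rw [hS]
    by_cases h : T.par v = x
    · rw [if_pos h, he]
      rw [h, lp.single_apply_self (E := fun _ : V => ℂ)]
      rw [← Real.rpow_natCast _ 2]
      simp [abs_of_pos (hwt v)]
    · rw [if_neg h, he, lp.single_apply_ne (E := fun _ : V => ℂ) 2 x (1:ℂ) h]
      simp
  have hsupp : Function.support (fun v : V => ‖(S e) v‖ ^ (2:ℝ)) ⊆ T.par ⁻¹' {x} := by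
    intro v hv
    simp only [Function.mem_support, hval] at hv
    by_contra h
    simp only [Set.mem_preimage, Set.mem_singleton_iff] at h
    exact hv (if_neg h)
  have hfib : ∑' w : (T.par ⁻¹' {x} : Set V), ‖(S e) (w:V)‖ ^ (2:ℝ) = ∑' v : V, ‖(S e) v‖ ^ (2:ℝ) :=
    tsum_subtype_eq_of_support_subset hsupp
  have hc2 : c ^ 2 ≤ ∑' w : (T.par ⁻¹' {x} : Set V), ‖(S e) (w:V)‖ ^ (2:ℝ) := by
    rw [hfib, ← hnorm]
    calc c ^ 2 = c ^ (2:ℝ) := by rw [← Real.rpow_natCast _ 2]; norm_num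
    _ ≤ ‖S e‖ ^ (2:ℝ) := Real.rpow_le_rpow hc.le hcn (by norm_num)
  have hsum' : Summable fun w : (T.par ⁻¹' {x} : Set V) => ‖(S e) (w:V)‖ ^ (2:ℝ) :=
    hsum.subtype _
  calc ENNReal.ofReal (c ^ 2)
      ≤ ENNReal.ofReal (∑' w : (T.par ⁻¹' {x} : Set V), ‖(S e) (w:V)‖ ^ (2:ℝ)) :=
        ENNReal.ofReal_le_ofReal hc2
    _ = ∑' w : (T.par ⁻¹' {x} : Set V), ENNReal.ofReal (‖(S e) (w:V)‖ ^ (2:ℝ)) :=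
        ENNReal.ofReal_tsum_of_nonneg (fun _ => Real.rpow_nonneg (norm_nonneg _) _) hsum'
    _ = ∑' w : (T.par ⁻¹' {x} : Set V), ENNReal.ofReal (wt w ^ 2) := by
        apply tsum_congr; rintro ⟨w, hw⟩
        rw [hval w, if_pos (show T.par w = x from hw)]

lemma fiber_sum_bound {V : Type*} (T : RootlessTree V)
    (wt : V → ℝ)
    {c : ℝ}
    (hchild : ∀ x : V,
      ENNReal.ofReal (c ^ 2) ≤ ∑' w : (T.par ⁻¹' {x} : Set V), ENNReal.ofReal (wt w ^ 2))
    (m : ℕ) (x : V) :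
    ENNReal.ofReal (c ^ 2) ^ m ≤
      ∑' w : V, (if T.par^[m] w = x then ENNReal.ofReal (lamN T wt m w ^ 2) else 0) := by
  induction m generalizing x with
  | zero =>
    have : ∑' w : V, (if T.par^[0] w = x then ENNReal.ofReal (lamN T wt 0 w ^ 2) else 0)
        = ENNReal.ofReal (lamN T wt 0 x ^ 2) := by
      rw [tsum_eq_single x]
      · simp
      · intro b hb; simp [hb]
    rw [this]
    simp [lamN]
  | succ m ih =>
    set G : V → ℝ≥0∞ := fun w =>
      if T.par^[m+1] w = x then ENNReal.ofReal (lamN T wt (m+1) w ^ 2) else 0 with hG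
    have hfib : ∑' w : V, G w = ∑' y : V, ∑' w : (T.par ⁻¹' {y} : Set V), G w :=
      (ENNReal.tsum_fiberwise G T.par).symm
    have hinner : ∀ y : V, ∑' w : (T.par ⁻¹' {y} : Set V), G w =
        (if T.par^[m] y = x then ENNReal.ofReal (lamN T wt m y ^ 2) else 0) *
          ∑' w : (T.par ⁻¹' {y} : Set V), ENNReal.ofReal (wt w ^ 2) := by
      intro y
      rw [← ENNReal.tsum_mul_left]
      apply tsum_congr
      rintro ⟨w, hw⟩
      have hw' : T.par w = y := hw
      have h1 : T.par^[m+1] w = T.par^[m] y := by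
        rw [Function.iterate_succ_apply, hw']
      have h2 : lamN T wt (m+1) w ^ 2 = lamN T wt m y ^ 2 * wt w ^ 2 := by
        rw [lamN_succ', hw']; ring
      simp only [hG, h1, h2]
      by_cases h : T.par^[m] y = x
      · rw [if_pos h, if_pos h, ENNReal.ofReal_mul (sq_nonneg _)]
      · rw [if_neg h, if_neg h, zero_mul]
    calc ENNReal.ofReal (c ^ 2) ^ (m + 1)
        = ENNReal.ofReal (c ^ 2) ^ m * ENNReal.ofReal (c ^ 2) := pow_succ _ _
      _ ≤ (∑' y : V, (if T.par^[m] y = x then ENNReal.ofReal (lamN T wt m y ^ 2) else 0)) *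
            ENNReal.ofReal (c ^ 2) := mul_le_mul_left (ih x) _
      _ = ∑' y : V, (if T.par^[m] y = x then ENNReal.ofReal (lamN T wt m y ^ 2) else 0) *
            ENNReal.ofReal (c ^ 2) := ENNReal.tsum_mul_right.symm
      _ ≤ ∑' y : V, ∑' w : (T.par ⁻¹' {y} : Set V), G w := by
          apply ENNReal.tsum_le_tsum
          intro y
          rw [hinner y]
          exact mul_le_mul_right (hchild y) _
      _ = ∑' w : V, G w := hfib.symm


/-- For a bounded left-invertible weighted shift `S_λ` and `n ≥ 1`, the range of `S_λⁿ`
consists exactly of those `f ∈ ℓ²(V)` such that `f/λ⁽ⁿ⁾` is constant on `Chiⁿ(v)` for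
every vertex `v`. -/
theorem stmt14 {V : Type*} [Countable V] [Infinite V] (T : RootlessTree V)
    (wt : V → ℝ) (hwt : ∀ u : V, 0 < wt u)
    (S : lp (fun _ : V => ℂ) 2 →L[ℂ] lp (fun _ : V => ℂ) 2)
    (hS : ∀ (f : lp (fun _ : V => ℂ) 2) (v : V), (S f) v = (wt v : ℂ) * f (T.par v))
    (hleft : ∃ c : ℝ, 0 < c ∧ ∀ f : lp (fun _ : V => ℂ) 2, c * ‖f‖ ≤ ‖S f‖)
    (n : ℕ) (hn : 1 ≤ n) :
    Set.range ⇑(S ^ n) =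
      {f : lp (fun _ : V => ℂ) 2 | ∀ v w₁ w₂ : V,
        T.par^[n] w₁ = v → T.par^[n] w₂ = v →
          f w₁ / (lamN T wt n w₁ : ℂ) = f w₂ / (lamN T wt n w₂ : ℂ)} := by
  obtain ⟨c, hc, hb⟩ := hleft
  have hlamne : ∀ (m : ℕ) (u : V), (lamN T wt m u : ℂ) ≠ 0 := by
    intro m u
    exact_mod_cast (lamN_pos' T wt hwt m u).ne'
  ext f
  constructor
  · rintro ⟨g, rfl⟩ v w₁ w₂ h₁ h₂
    rw [pow_apply' T wt S hS n g w₁, pow_apply' T wt S hS n g w₂, h₁, h₂,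
      mul_comm, mul_comm ((lamN T wt n w₂ : ℂ)), mul_div_assoc, mul_div_assoc,
      div_self (hlamne n w₁), div_self (hlamne n w₂)]
  · intro hf
    -- choose a chain of children below each vertex
    choose ch hch using T.leafless
    have hchN : ∀ (m : ℕ) (u : V), T.par^[m] (ch^[m] u) = u := by
      intro m u
      induction m with
      | zero => simp
      | succ m ih =>
        rw [Function.iterate_succ_apply' (f := ch), Function.iterate_succ_apply (f := T.par),
          hch, ih]
    set g₀ : V → ℂ := fun u => f (ch^[n] u) / (lamN T wt n (ch^[n] u) : ℂ) with hg₀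
    have hkey : ∀ w : V, (f : ∀ _ : V, ℂ) w = (lamN T wt n w : ℂ) * g₀ (T.par^[n] w) := by
      intro w
      have := hf (T.par^[n] w) w (ch^[n] (T.par^[n] w)) rfl (hchN n _)
      rw [div_eq_iff (hlamne n w)] at this
      rw [this, hg₀]
      ring
    -- summability of g₀
    have hp : 0 < (2 : ℝ≥0∞).toReal := by norm_num
    have h2 : ∀ x : ℝ, x ^ (2:ℝ) = x ^ 2 := fun x => by
      rw [show (2:ℝ) = ((2:ℕ):ℝ) by norm_num, Real.rpow_natCast]
    have hfs : Summable fun w : V => ‖f w‖ ^ 2 := by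
      have := (memℓp_gen_iff hp).1 (lp.memℓp f)
      simpa [h2] using this
    have hffin : ∑' w : V, ENNReal.ofReal (‖f w‖ ^ 2) ≠ ⊤ := by
      rw [← ENNReal.ofReal_tsum_of_nonneg (fun _ => sq_nonneg _) hfs]
      exact ENNReal.ofReal_ne_top
    have hchild := child_sum_bound T wt hwt S hS hc hb
    have hfiber := fiber_sum_bound T wt hchild n
    -- fiberwise decomposition of the sum for f
    have hdec : ∑' w : V, ENNReal.ofReal (‖f w‖ ^ 2)
        = ∑' x : V, ∑' w : ((T.par^[n]) ⁻¹' {x} : Set V), ENNReal.ofReal (‖f (w:V)‖ ^ 2) :=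
      (ENNReal.tsum_fiberwise _ (T.par^[n])).symm
    have hinner : ∀ x : V,
        ∑' w : ((T.par^[n]) ⁻¹' {x} : Set V), ENNReal.ofReal (‖f (w:V)‖ ^ 2)
        = ENNReal.ofReal (‖g₀ x‖ ^ 2) *
          ∑' w : V, (if T.par^[n] w = x then ENNReal.ofReal (lamN T wt n w ^ 2) else 0) := by
      intro x
      have hsub := tsum_subtype ((T.par^[n]) ⁻¹' {x}) (fun v : V => ENNReal.ofReal (‖f v‖ ^ 2))
      rw [← ENNReal.tsum_mul_left, hsub]
      apply tsum_congr
      intro w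
      rw [Set.indicator_apply]
      by_cases h : w ∈ (T.par^[n]) ⁻¹' {x}
      · have hx : T.par^[n] w = x := h
        rw [if_pos h, if_pos hx, hkey w, hx]
        rw [← ENNReal.ofReal_mul (sq_nonneg _)]
        congr 1
        rw [norm_mul, mul_pow, Complex.norm_real, Real.norm_eq_abs,
          abs_of_pos (lamN_pos' T wt hwt n w)]
        ring
      · have hx : ¬ T.par^[n] w = x := h
        rw [if_neg h, if_neg hx, mul_zero]
    have hbound : ENNReal.ofReal (c ^ 2) ^ n * ∑' x : V, ENNReal.ofReal (‖g₀ x‖ ^ 2)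
        ≤ ∑' w : V, ENNReal.ofReal (‖f w‖ ^ 2) := by
      rw [hdec, ← ENNReal.tsum_mul_left]
      apply ENNReal.tsum_le_tsum
      intro x
      rw [hinner x, mul_comm (ENNReal.ofReal (c ^ 2) ^ n)]
      exact mul_le_mul_right (hfiber x) _
    have hgfin : ∑' x : V, ENNReal.ofReal (‖g₀ x‖ ^ 2) ≠ ⊤ := by
      intro htop
      apply hffin
      refine top_le_iff.mp ?_
      refine le_trans ?_ hbound
      rw [htop, ENNReal.mul_top]
      simp only [ne_eq, pow_eq_zero_iff', ENNReal.ofReal_eq_zero, not_and_or, not_le]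
      left
      positivity
    have hgsum : Summable fun x : V => ‖g₀ x‖ ^ 2 := by
      have hcoe : ∀ x : V, ENNReal.ofReal (‖g₀ x‖ ^ 2) = ((‖g₀ x‖₊ ^ 2 : ℝ≥0) : ℝ≥0∞) := by
        intro x
        rw [ENNReal.ofReal_pow (norm_nonneg _), ofReal_norm, enorm_eq_nnnorm, ENNReal.coe_pow]
      have : ∑' x : V, ((‖g₀ x‖₊ ^ 2 : ℝ≥0) : ℝ≥0∞) ≠ ⊤ := by
        rw [← tsum_congr hcoe]; exact hgfin
      have hs := ENNReal.tsum_coe_ne_top_iff_summable.mp this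
      have := NNReal.summable_coe.mpr hs
      simpa using this
    have hmem : Memℓp g₀ 2 := by
      apply memℓp_gen
      simpa [h2] using hgsum
    refine ⟨⟨g₀, hmem⟩, ?_⟩
    apply lp.ext
    funext v
    have : ((S ^ n) (⟨g₀, hmem⟩ : lp (fun _ : V => ℂ) 2)) v
        = (lamN T wt n v : ℂ) * g₀ (T.par^[n] v) := pow_apply' T wt S hS n _ v
    rw [this]
    exact (hkey v).symm
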